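/- A Banach A-valued function algebra 𝒜 on a compact Hausdorff space X is natural if and only if for every finite set {f₁,…,fₙ} ⊆ 𝒜 with ⋂ⱼ Z_s(fⱼ) = ∅ (where Z_s(f) = {x ∈ X : f(x) is not invertible in A}), there exist g₁,…,gₙ ∈ 𝒜 with f₁g₁ + ⋯ + fₙgₙ = 1. -/

import Mathlib

open WeakDual

variable {X : Type*} [TopologicalSpace X] [CompactSpace X] [T2Space X] [Nonempty X]
variable {A : Type*} [NormedCommRing A] [NormedAlgebra ℂ A] [CompleteSpace A] [Nontrivial A]
variable {B : Type*} [NormedCommRing B] [NormedAlgebra ℂ B] [CompleteSpace B]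

/-- A Banach A-valued function algebra 𝒜 is natural iff for every f₁,…,fₙ ∈ 𝒜 whose
singular sets have empty intersection there are g₁,…,gₙ ∈ 𝒜 with ∑ fⱼgⱼ = 1. -/
theorem stmt6
(ι : B →ₐ[ℂ] C(X, A)) (hinj : Function.Injective ι)
    (κ : A →ₐ[ℂ] B) (hκ : ∀ a : A, ι (κ a) = ContinuousMap.const X a)
    (hκnorm : ∃ c₁ > (0:ℝ), ∃ c₂ > (0:ℝ), ∀ a : A, c₁ * ‖a‖ ≤ ‖κ a‖ ∧ ‖κ a‖ ≤ c₂ * ‖a‖)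
    (hdom : ∀ f : B, ‖ι f‖ ≤ ‖f‖)
    (hsep : ∀ x y : X, x ≠ y → ∀ M : Ideal A, M.IsMaximal → ∃ f : B, ι f x - ι f y ∉ M) :
    (∀ ℳ : Ideal B, ℳ.IsMaximal → ∃ (x₀ : X) (M : Ideal A), M.IsMaximal ∧
        ∀ f : B, f ∈ ℳ ↔ ι f x₀ ∈ M) ↔
      (∀ (n : ℕ) (f : Fin n → B), (∀ x : X, ∃ j, IsUnit (ι (f j) x)) →
        ∃ g : Fin n → B, ∑ j, f j * g j = 1) := by
  constructor
  · -- naturality → Bezout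
    intro hnat n f hf
    by_contra hg
    -- the ideal generated by the f j is proper
    have hI : Ideal.span (Set.range f) ≠ ⊤ := by
      intro htop
      have h1 : (1 : B) ∈ Ideal.span (Set.range f) := htop ▸ Submodule.mem_top
      rw [Ideal.span, Submodule.mem_span_range_iff_exists_fun] at h1
      obtain ⟨c, hc⟩ := h1
      refine hg ⟨c, ?_⟩
      rw [← hc]
      exact Finset.sum_congr rfl fun j _ => by rw [smul_eq_mul, mul_comm]
    obtain ⟨ℳ, hℳmax, hℳ⟩ := Ideal.exists_le_maximal _ hI
    obtain ⟨x₀, M, hMmax, hmem⟩ := hnat ℳ hℳmax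
    obtain ⟨j, hj⟩ := hf x₀
    have : f j ∈ ℳ := hℳ (Ideal.subset_span ⟨j, rfl⟩)
    exact hMmax.ne_top (M.eq_top_of_isUnit_mem ((hmem (f j)).1 this) hj)
  · -- Bezout → naturality
    intro hB ℳ hℳmax
    -- there is a point x₀ at which every element of ℳ is singular
    have hx₀ : ∃ x₀ : X, ∀ f ∈ ℳ, ¬ IsUnit (ι f x₀) := by
      by_contra h
      push_neg at h
      -- the open sets {x | IsUnit (ι f x)}, f ∈ ℳ, cover X
      have hcov : (Set.univ : Set X) ⊆ ⋃ f : ℳ, {x : X | IsUnit (ι (f : B) x)} := by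
        intro x _
        obtain ⟨f, hf, hu⟩ := h x
        exact Set.mem_iUnion.2 ⟨⟨f, hf⟩, hu⟩
      obtain ⟨t, ht⟩ := IsCompact.elim_finite_subcover isCompact_univ
        (fun f : ℳ => {x : X | IsUnit (ι (f : B) x)})
        (fun f => Units.isOpen.preimage (ι (f : B)).continuous) hcov
      -- enumerate the finite subcover
      set n := t.card with hn
      obtain ⟨e⟩ : Nonempty (Fin n ≃ {f // f ∈ t}) := ⟨(t.equivFin).symm⟩
      set F : Fin n → B := fun j => ((e j : ℳ) : B) with hF
      have hFmem : ∀ j, F j ∈ ℳ := fun j => (e j : ℳ).2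
      have hcond : ∀ x : X, ∃ j, IsUnit (ι (F j) x) := by
        intro x
        have := ht (Set.mem_univ x)
        simp only [Set.mem_iUnion] at this
        obtain ⟨f, hf, hx⟩ := this
        exact ⟨e.symm ⟨f, hf⟩, by simpa [hF, e.apply_symm_apply] using hx⟩
      obtain ⟨g, hg⟩ := hB n F hcond
      have h1 : (1 : B) ∈ ℳ := hg ▸ Ideal.sum_mem _ fun j _ => ℳ.mul_mem_right _ (hFmem j)
      exact hℳmax.ne_top (Ideal.eq_top_of_isUnit_mem _ h1 isUnit_one)
    obtain ⟨x₀, hx₀⟩ := hx₀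
    -- evaluation at x₀ as an algebra hom; it is surjective thanks to κ
    set ev : B →ₐ[ℂ] A := (ContinuousMap.evalAlgHom ℂ A x₀).comp ι with hev
    have hevsurj : Function.Surjective ev := fun a =>
      ⟨κ a, by simp [hev, ContinuousMap.evalAlgHom, hκ a]; rfl⟩
    -- the image ideal is proper
    have hJ : Ideal.map ev ℳ ≠ ⊤ := by
      intro htop
      have : (1 : A) ∈ Ideal.map ev ℳ := htop ▸ Submodule.mem_top
      rw [Ideal.mem_map_iff_of_surjective _ hevsurj] at this
      obtain ⟨f, hf, hf1⟩ := this
      exact hx₀ f hf (hf1 ▸ isUnit_one)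
    obtain ⟨M, hMmax, hJM⟩ := Ideal.exists_le_maximal _ hJ
    refine ⟨x₀, M, hMmax, fun f => ⟨fun hf => ?_, fun hf => ?_⟩⟩
    · exact hJM (Ideal.mem_map_of_mem ev hf)
    · -- ℳ ⊆ comap ev M and the latter is proper, so equality by maximality
      have hsub : ℳ ≤ Ideal.comap ev M := fun g hg => hJM (Ideal.mem_map_of_mem ev hg)
      have hne : Ideal.comap ev M ≠ ⊤ := by
        intro htop
        have : (1 : B) ∈ Ideal.comap ev M := htop ▸ Submodule.mem_top
        exact hMmax.ne_top (Ideal.eq_top_of_isUnit_mem _ (by simpa using this) isUnit_one)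
      have := hℳmax.eq_of_le hne hsub
      rw [this]
      exact hf
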